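/- Fix 0 < q < 1 and μ > 0. Let θ_n(q) be the unique positive solution of ∑_{i=0}^{n−1} θ q^i/(1+θ q^i) = μ (which exists for n ≥ 2μ), and let θ(q) be the unique positive solution of ∑_{i=0}^{∞} θ q^i/(1+θ q^i) = μ. Then θ_n(q) → θ(q) as n → ∞, and consequently, for every fixed integer x ≥ 0, the probability P(X_n = x) under KB(n, θ_n(q), q) converges to the Heine probability q^{x(x−1)/2} θ(q)^x/(q;q)_x · e_q(−θ(q)). -/

import Mathlib

open Filter Finset

/-- The q-shifted factorial `(z;q)_n = ∏_{i=0}^{n-1} (1 - z q^i)`. -/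
noncomputable def qPoch (q z : ℝ) (n : ℕ) : ℝ := ∏ i ∈ range n, (1 - z * q ^ i)

/-- The q-binomial coefficient `[n choose k]_q = (q;q)_n / ((q;q)_k (q;q)_{n-k})`. -/
noncomputable def qBinom (q : ℝ) (n k : ℕ) : ℝ := qPoch q q n / (qPoch q q k * qPoch q q (n - k))

/-- The q-exponential `e_q(z) = 1/(z;q)_∞`. -/
noncomputable def qExp (q z : ℝ) : ℝ := (∏' i : ℕ, (1 - z * q ^ i))⁻¹

private lemma log_one_add_diff {a b : ℝ} (ha : 0 ≤ a) (hb : 0 ≤ b) :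
    |Real.log (1 + b) - Real.log (1 + a)| ≤ |b - a| := by
  have key : ∀ u v : ℝ, 0 ≤ u → u ≤ v →
      Real.log (1 + v) - Real.log (1 + u) ≤ v - u := by
    intro u v hu huv
    have h1u : (0:ℝ) < 1 + u := by linarith
    have h1v : (0:ℝ) < 1 + v := by linarith
    have : Real.log (1 + v) - Real.log (1 + u) = Real.log ((1 + v) / (1 + u)) := by
      rw [Real.log_div (by positivity) (by positivity)]
    rw [this]
    have h2 := Real.log_le_sub_one_of_pos (x := (1 + v) / (1 + u)) (by positivity)
    have h3 : (1 + v) / (1 + u) - 1 = (v - u) / (1 + u) := by field_simp; ring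
    have h4 : (v - u) / (1 + u) ≤ v - u := by
      apply div_le_self (by linarith) (by linarith)
    linarith
  rcases le_total a b with h | h
  · have h1 : 0 ≤ Real.log (1 + b) - Real.log (1 + a) := by
      have := Real.log_le_log (by linarith : (0:ℝ) < 1 + a) (by linarith : 1 + a ≤ 1 + b)
      linarith
    rw [abs_of_nonneg h1, abs_of_nonneg (by linarith : (0:ℝ) ≤ b - a)]
    exact key a b ha h
  · have h1 : Real.log (1 + b) - Real.log (1 + a) ≤ 0 := by
      have := Real.log_le_log (by linarith : (0:ℝ) < 1 + b) (by linarith : 1 + b ≤ 1 + a)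
      linarith
    rw [abs_of_nonpos h1, abs_of_nonpos (by linarith : b - a ≤ 0)]
    have := key b a hb h
    linarith

/-- If `θₙ(q)` is the unique positive solution of the finite mean equation
`∑_{i=0}^{n-1} θ q^i/(1+θ q^i) = μ` (for `n ≥ 2μ`) and `θ(q)` the unique positive solution
of the infinite mean equation `∑_{i=0}^∞ θ q^i/(1+θ q^i) = μ`, then `θₙ(q) → θ(q)`, and
for every fixed `x ≥ 0` the Kemp probability `P(Xₙ = x)` converges to the Heine probability
with parameter `θ(q)`. -/
theorem kemp_to_heine_constant_mean (q μ : ℝ) (hq0 : 0 < q) (hq1 : q < 1) (hμ : 0 < μ)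
    (θn : ℕ → ℝ)
    (hθn : ∀ n : ℕ, 2 * μ ≤ n →
      0 < θn n ∧ ∑ i ∈ range n, θn n * q ^ i / (1 + θn n * q ^ i) = μ)
    (θ : ℝ) (hθpos : 0 < θ) (hθ : ∑' i : ℕ, θ * q ^ i / (1 + θ * q ^ i) = μ)
    (hθuniq : ∀ θ' : ℝ, 0 < θ' → ∑' i : ℕ, θ' * q ^ i / (1 + θ' * q ^ i) = μ → θ' = θ) :
    Tendsto θn atTop (nhds θ) ∧
      ∀ x : ℕ,
        Tendsto
          (fun n : ℕ =>
            qBinom q n x * θn n ^ x * q ^ (x * (x - 1) / 2) /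
              ∏ i ∈ range n, (1 + θn n * q ^ i))
          atTop
          (nhds (q ^ (x * (x - 1) / 2) * θ ^ x / qPoch q q x * qExp q (-θ))) := by
  have hqpow : ∀ i : ℕ, (0:ℝ) < q ^ i := fun i => pow_pos hq0 i
  have hden : ∀ t : ℝ, 0 ≤ t → ∀ i : ℕ, (0:ℝ) < 1 + t * q ^ i := by
    intro t ht i; have := hqpow i; nlinarith
  have hgnonneg : ∀ t : ℝ, 0 ≤ t → ∀ i : ℕ, (0:ℝ) ≤ t * q ^ i / (1 + t * q ^ i) := by
    intro t ht i
    exact div_nonneg (by positivity) (hden t ht i).le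
  -- monotonicity of each term in t
  have hgmono : ∀ a b : ℝ, 0 ≤ a → a ≤ b → ∀ i : ℕ,
      a * q ^ i / (1 + a * q ^ i) ≤ b * q ^ i / (1 + b * q ^ i) := by
    intro a b ha hab i
    have hb : 0 ≤ b := ha.trans hab
    rw [div_le_div_iff₀ (hden a ha i) (hden b hb i)]
    have := hqpow i
    nlinarith [hqpow i, mul_le_mul_of_nonneg_right hab (hqpow i).le]
  have hgstrict : ∀ a b : ℝ, 0 ≤ a → a < b →
      a * q ^ 0 / (1 + a * q ^ 0) < b * q ^ 0 / (1 + b * q ^ 0) := by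
    intro a b ha hab
    have hb : 0 ≤ b := ha.trans hab.le
    rw [div_lt_div_iff₀ (hden a ha 0) (hden b hb 0)]
    simp only [pow_zero, mul_one]
    nlinarith
  have hgeom : Summable (fun i : ℕ => q ^ i) := summable_geometric_of_lt_one hq0.le hq1
  have hsum : ∀ t : ℝ, 0 ≤ t → Summable (fun i : ℕ => t * q ^ i / (1 + t * q ^ i)) := by
    intro t ht
    apply Summable.of_nonneg_of_le (hgnonneg t ht)
      (fun i => ?_) (hgeom.mul_left t)
    calc t * q ^ i / (1 + t * q ^ i) ≤ t * q ^ i / 1 :=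
          div_le_div_of_nonneg_left (by positivity) one_pos (by nlinarith [hqpow i])
      _ = t * q ^ i := div_one _
  -- θ ≤ θn n for n with 2μ ≤ n
  have hlow : ∀ n : ℕ, 2 * μ ≤ n → θ ≤ θn n := by
    intro n hn
    obtain ⟨hp, he⟩ := hθn n hn
    by_contra hcon
    push_neg at hcon
    have hn1 : 0 < n := by
      by_contra h0
      push_neg at h0
      interval_cases n
      simp at hn; linarith
    have hlt : ∑ i ∈ range n, θn n * q ^ i / (1 + θn n * q ^ i)
        < ∑ i ∈ range n, θ * q ^ i / (1 + θ * q ^ i) := by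
      apply Finset.sum_lt_sum (fun i _ => hgmono _ _ hp.le hcon.le i)
      exact ⟨0, Finset.mem_range.2 hn1, hgstrict (θn n) θ hp.le hcon⟩
    have hle : ∑ i ∈ range n, θ * q ^ i / (1 + θ * q ^ i)
        ≤ ∑' i : ℕ, θ * q ^ i / (1 + θ * q ^ i) :=
      Summable.sum_le_tsum (range n) (fun i _ => hgnonneg θ hθpos.le i) (hsum θ hθpos.le)
    rw [he] at hlt
    rw [hθ] at hle
    linarith
  have hNev : ∀ᶠ n : ℕ in atTop, 2 * μ ≤ n := by
    filter_upwards [eventually_ge_atTop ⌈2 * μ⌉₊] with n hn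
    exact le_trans (Nat.le_ceil _) (Nat.cast_le.2 hn)
  -- convergence θn → θ
  have htend : Tendsto θn atTop (nhds θ) := by
    rw [tendsto_order]
    constructor
    · intro a ha
      filter_upwards [hNev] with n hn
      exact lt_of_lt_of_le ha (hlow n hn)
    · intro a ha
      have haa : 0 ≤ a := by linarith
      have hstrict : μ < ∑' i : ℕ, a * q ^ i / (1 + a * q ^ i) := by
        rw [← hθ]
        exact Summable.tsum_lt_tsum_of_nonneg (hgnonneg θ hθpos.le)
          (hgmono θ a hθpos.le ha.le) (hgstrict θ a hθpos.le ha)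
          (hsum a haa)
      have hps : Tendsto (fun n : ℕ => ∑ i ∈ range n, a * q ^ i / (1 + a * q ^ i))
          atTop (nhds (∑' i : ℕ, a * q ^ i / (1 + a * q ^ i))) :=
        (hsum a haa).hasSum.tendsto_sum_nat
      have hev : ∀ᶠ n : ℕ in atTop,
          μ < ∑ i ∈ range n, a * q ^ i / (1 + a * q ^ i) :=
        hps.eventually (lt_mem_nhds hstrict)
      filter_upwards [hNev, hev] with n hn hgt
      obtain ⟨hp, he⟩ := hθn n hn
      by_contra hcon
      push_neg at hcon
      have : ∑ i ∈ range n, a * q ^ i / (1 + a * q ^ i)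
          ≤ ∑ i ∈ range n, θn n * q ^ i / (1 + θn n * q ^ i) :=
        Finset.sum_le_sum (fun i _ => hgmono a (θn n) haa hcon i)
      rw [he] at this
      linarith
  refine ⟨htend, ?_⟩
  -- part 2
  intro x
  have hpochpos : ∀ m : ℕ, 0 < qPoch q q m := by
    intro m
    apply Finset.prod_pos
    intro i _
    have h1 : q * q ^ i ≤ q * 1 := by
      apply mul_le_mul_of_nonneg_left _ hq0.le
      exact pow_le_one₀ hq0.le hq1.le
    nlinarith
  -- (a) qBinom limit
  have hA : Tendsto (fun n : ℕ => qBinom q n x) atTop (nhds (qPoch q q x)⁻¹) := by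
    have heq : ∀ᶠ n : ℕ in atTop, qBinom q n x =
        (∏ j ∈ range x, (1 - q * q ^ (n - x + j))) / qPoch q q x := by
      filter_upwards [eventually_ge_atTop x] with n hn
      have hsplit : qPoch q q n = qPoch q q (n - x) * ∏ j ∈ range x, (1 - q * q ^ (n - x + j)) := by
        conv_lhs => rw [← Nat.sub_add_cancel hn]
        rw [qPoch, Finset.prod_range_add]
        rfl
      rw [qBinom, hsplit]
      have h1 := (hpochpos (n - x)).ne'
      have h2 := (hpochpos x).ne'
      field_simp
    refine Tendsto.congr' (heq.mono fun n h => h.symm) ?_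
    have hprod : Tendsto (fun n : ℕ => ∏ j ∈ range x, (1 - q * q ^ (n - x + j)))
        atTop (nhds (∏ j ∈ range x, (1:ℝ))) := by
      apply tendsto_finset_prod
      intro j _
      have hq' : Tendsto (fun n : ℕ => q ^ (n - x + j)) atTop (nhds 0) := by
        apply (tendsto_pow_atTop_nhds_zero_of_lt_one hq0.le hq1).comp
        exact tendsto_atTop_mono (fun n => Nat.le_add_right _ _) (tendsto_sub_atTop_nat x)
      have : Tendsto (fun n : ℕ => 1 - q * q ^ (n - x + j)) atTop (nhds (1 - q * 0)) :=
        tendsto_const_nhds.sub (tendsto_const_nhds.mul hq')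
      simpa using this
    simp only [Finset.prod_const_one] at hprod
    have := hprod.div_const (qPoch q q x)
    simpa [one_div] using this
  -- (b) product limit
  set L : ℝ := ∑' i : ℕ, Real.log (1 + θ * q ^ i) with hL
  have hlognonneg : ∀ t : ℝ, 0 ≤ t → ∀ i : ℕ, 0 ≤ Real.log (1 + t * q ^ i) := by
    intro t ht i
    apply Real.log_nonneg
    nlinarith [hqpow i]
  have hlogsum : Summable (fun i : ℕ => Real.log (1 + θ * q ^ i)) := by
    apply Summable.of_nonneg_of_le (hlognonneg θ hθpos.le) (fun i => ?_) (hgeom.mul_left θ)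
    have := Real.log_le_sub_one_of_pos (hden θ hθpos.le i)
    linarith
  have hhp : HasProd (fun i : ℕ => 1 + θ * q ^ i) (Real.exp L) := by
    have hs : Tendsto (fun s : Finset ℕ => ∑ i ∈ s, Real.log (1 + θ * q ^ i))
        atTop (nhds L) := hlogsum.hasSum
    have hexp : Tendsto (fun s : Finset ℕ => Real.exp (∑ i ∈ s, Real.log (1 + θ * q ^ i)))
        atTop (nhds (Real.exp L)) := (Real.continuous_exp.tendsto L).comp hs
    refine hexp.congr (fun s => ?_)
    rw [Real.exp_sum]
    exact Finset.prod_congr rfl (fun i _ => Real.exp_log (hden θ hθpos.le i))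
  have htprod : (∏' i : ℕ, (1 + θ * q ^ i)) = Real.exp L := hhp.tprod_eq
  -- partial log sums with θn
  have hU : Tendsto (fun n : ℕ => ∑ i ∈ range n, Real.log (1 + θ * q ^ i))
      atTop (nhds L) := hlogsum.hasSum.tendsto_sum_nat
  have hdiff : Tendsto (fun n : ℕ => (∑ i ∈ range n, Real.log (1 + θn n * q ^ i))
      - ∑ i ∈ range n, Real.log (1 + θ * q ^ i)) atTop (nhds 0) := by
    apply squeeze_zero_norm' (a := fun n => |θn n - θ| * (1 - q)⁻¹)
    · filter_upwards [hNev] with n hn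
      obtain ⟨hp, _⟩ := hθn n hn
      rw [Real.norm_eq_abs, ← Finset.sum_sub_distrib]
      calc |∑ i ∈ range n, (Real.log (1 + θn n * q ^ i) - Real.log (1 + θ * q ^ i))|
          ≤ ∑ i ∈ range n, |Real.log (1 + θn n * q ^ i) - Real.log (1 + θ * q ^ i)| :=
            Finset.abs_sum_le_sum_abs _ _
        _ ≤ ∑ i ∈ range n, |θn n - θ| * q ^ i := by
            apply Finset.sum_le_sum
            intro i _
            have h1 := log_one_add_diff (a := θ * q ^ i) (b := θn n * q ^ i)
              (by positivity) (by positivity)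
            have h2 : |θn n * q ^ i - θ * q ^ i| = |θn n - θ| * q ^ i := by
              rw [← sub_mul, abs_mul, abs_of_pos (hqpow i)]
            rw [h2] at h1
            exact h1
        _ = |θn n - θ| * ∑ i ∈ range n, q ^ i := by rw [Finset.mul_sum]
        _ ≤ |θn n - θ| * (1 - q)⁻¹ := by
            apply mul_le_mul_of_nonneg_left _ (abs_nonneg _)
            have := Summable.sum_le_tsum (range n) (fun i _ => (hqpow i).le) hgeom
            rwa [tsum_geometric_of_lt_one hq0.le hq1] at this
    · have h1 : Tendsto (fun n : ℕ => |θn n - θ|) atTop (nhds 0) := by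
        have h2 : Tendsto (fun n => θn n - θ) atTop (nhds (θ - θ)) :=
          htend.sub tendsto_const_nhds
        have := h2.abs
        simpa using this
      have := h1.mul_const (1 - q)⁻¹
      simpa using this
  have hT : Tendsto (fun n : ℕ => ∑ i ∈ range n, Real.log (1 + θn n * q ^ i))
      atTop (nhds L) := by
    have := hdiff.add hU
    simp only [sub_add_cancel, zero_add] at this
    exact this
  have hD : Tendsto (fun n : ℕ => ∏ i ∈ range n, (1 + θn n * q ^ i))
      atTop (nhds (Real.exp L)) := by
    have hexp : Tendsto (fun n : ℕ => Real.exp (∑ i ∈ range n, Real.log (1 + θn n * q ^ i)))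
        atTop (nhds (Real.exp L)) := (Real.continuous_exp.tendsto L).comp hT
    refine Tendsto.congr' ?_ hexp
    filter_upwards [hNev] with n hn
    obtain ⟨hp, _⟩ := hθn n hn
    rw [Real.exp_sum]
    exact Finset.prod_congr rfl (fun i _ => Real.exp_log (hden (θn n) hp.le i))
  -- combine
  have hnum : Tendsto (fun n : ℕ => qBinom q n x * θn n ^ x * q ^ (x * (x - 1) / 2))
      atTop (nhds ((qPoch q q x)⁻¹ * θ ^ x * q ^ (x * (x - 1) / 2))) :=
    (hA.mul (htend.pow x)).mul_const _
  have hfinal := hnum.div hD (Real.exp_ne_zero L)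
  convert hfinal using 2
  · rfl
  have hqExp : qExp q (-θ) = (Real.exp L)⁻¹ := by
    rw [qExp, ← htprod]
    congr 1
    exact tprod_congr (fun i => by ring)
  rw [hqExp]
  have hP := (hpochpos x).ne'
  field_simp
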